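/- k·(a_{k+1} + a_k) → 0 as k → ∞, i.e., a_{k+1} + a_k = o(1/k), where (a_k) satisfies a_0 = 1, a_1 = 0, a_k = (1/k)∑_{j=0}^{k-2} a_j b_{k-1-j} for k ≥ 2 with b_k = (-1)^{k+1}(1 - 2^{-k})ζ(k+1). -/

import Mathlib

open Filter Topology Finset

/-- Riemann zeta at integer arguments: ζ(k) = ∑_{n=1}^∞ 1/n^k. -/
noncomputable def zeta (k : ℕ) : ℝ := ∑' n : ℕ, 1 / (n + 1 : ℝ) ^ k

/-- b_k = (-1)^{k+1} (1 - 2^{-k}) ζ(k+1). -/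
noncomputable def b (k : ℕ) : ℝ := (-1) ^ (k + 1) * (1 - (2 : ℝ) ^ (-(k : ℤ))) * zeta (k + 1)

noncomputable def eps (m : ℕ) : ℝ := (1 - (2 : ℝ) ^ (-(m : ℤ))) * zeta (m + 1) - 1

noncomputable def D : ℕ → ℝ := fun m => if m = 0 then b 1 - 1 else b m + b (m + 1)

lemma b_eq (m : ℕ) : b m = (-1) ^ (m + 1) * (1 + eps m) := by
  unfold b eps; ring

lemma summable_zeta {k : ℕ} (hk : 2 ≤ k) : Summable (fun n : ℕ => 1 / ((n : ℝ) + 1) ^ k) := by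
  have h : Summable (fun n : ℕ => 1 / (n : ℝ) ^ k) :=
    Real.summable_one_div_nat_pow.2 (by omega)
  have := (summable_nat_add_iff 1).2 h
  simpa using this

lemma one_le_zeta {m : ℕ} (hm : 1 ≤ m) : 1 ≤ zeta (m + 1) := by
  have hs := summable_zeta (k := m + 1) (by omega)
  have h := Summable.le_tsum hs 0 (fun j _ => by positivity)
  simpa [zeta] using h

lemma hasSum_tele : HasSum (fun n : ℕ => 1 / ((n : ℝ) + 1) - 1 / ((n : ℝ) + 2)) 1 := by
  rw [hasSum_iff_tendsto_nat_of_nonneg]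
  · have heq : ∀ n : ℕ, ∑ i ∈ range n, (1 / ((i : ℝ) + 1) - 1 / ((i : ℝ) + 2)) =
        1 - 1 / ((n : ℝ) + 1) := by
      intro n
      have := Finset.sum_range_sub' (fun i : ℕ => 1 / ((i : ℝ) + 1)) n
      simp only [Nat.cast_zero] at this
      calc ∑ i ∈ range n, (1 / ((i : ℝ) + 1) - 1 / ((i : ℝ) + 2))
          = ∑ i ∈ range n, ((fun i : ℕ => 1 / ((i : ℝ) + 1)) i - (fun i : ℕ => 1 / ((i : ℝ) + 1)) (i+1)) := by
            apply Finset.sum_congr rfl; intro i _; push_cast; ring_nf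
        _ = 1 - 1 / ((n : ℝ) + 1) := by rw [this]; norm_num
    simp only [heq]
    have : Tendsto (fun n : ℕ => 1 - 1 / ((n : ℝ) + 1)) atTop (𝓝 (1 - 0)) :=
      tendsto_const_nhds.sub tendsto_one_div_add_atTop_nhds_zero_nat
    simpa using this
  · intro i
    have h1 : (0:ℝ) < (i : ℝ) + 1 := by positivity
    have h2 : (0:ℝ) < (i : ℝ) + 2 := by positivity
    rw [sub_nonneg]
    apply one_div_le_one_div_of_le h1 (by linarith)

lemma zeta_le {m : ℕ} (hm : 1 ≤ m) : zeta (m + 1) ≤ 1 + 2 * (1/2 : ℝ) ^ m := by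
  have hs := summable_zeta (k := m + 1) (by omega)
  have hshift : Summable (fun n : ℕ => 1 / ((n : ℝ) + 2) ^ (m+1)) := by
    have := (summable_nat_add_iff (f := fun n : ℕ => 1 / ((n : ℝ) + 1) ^ (m+1)) 1).2 hs
    refine this.congr (fun n => ?_)
    push_cast; ring_nf
  have hsplit : zeta (m + 1) = 1 + ∑' n : ℕ, 1 / ((n : ℝ) + 2) ^ (m+1) := by
    have := Summable.tsum_eq_zero_add (f := fun n : ℕ => 1 / ((n : ℝ) + 1) ^ (m+1)) hs
    simp only [Nat.cast_zero, zero_add, one_pow] at this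
    rw [zeta, this]
    norm_num
    apply tsum_congr; intro n; push_cast; ring_nf
  have hg : HasSum (fun n : ℕ => (1/2:ℝ)^(m-1) * (1 / ((n : ℝ) + 1) - 1 / ((n : ℝ) + 2))) ((1/2:ℝ)^(m-1) * 1) :=
    hasSum_tele.mul_left _
  have key : ∀ n : ℕ, 1 / ((n : ℝ) + 2) ^ (m+1) ≤ (1/2:ℝ)^(m-1) * (1 / ((n : ℝ) + 1) - 1 / ((n : ℝ) + 2)) := by
    intro n
    have e1 : 1 / ((n:ℝ) + 1) - 1 / ((n:ℝ) + 2) = 1 / (((n:ℝ) + 1) * ((n:ℝ) + 2)) := by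
      field_simp; ring
    rw [e1]
    have hmm : m + 1 = 2 + (m - 1) := by omega
    have e2 : (((n:ℝ) + 1) * ((n:ℝ) + 2)) * 2 ^ (m-1) ≤ ((n:ℝ) + 2) ^ (m + 1) := by
      rw [hmm, pow_add]
      have hb : ((n:ℝ)+1) * ((n:ℝ)+2) ≤ ((n:ℝ)+2) ^ 2 := by nlinarith [Nat.cast_nonneg (α := ℝ) n]
      have hc : (2:ℝ) ^ (m-1) ≤ ((n:ℝ)+2) ^ (m-1) := by
        apply pow_le_pow_left₀ (by norm_num) (by linarith [Nat.cast_nonneg (α := ℝ) n])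
      have hp1 : (0:ℝ) ≤ ((n:ℝ)+1) * ((n:ℝ)+2) := by positivity
      have hp2 : (0:ℝ) ≤ (2:ℝ)^(m-1) := by positivity
      nlinarith
    calc 1 / ((n:ℝ) + 2) ^ (m+1) ≤ 1 / ((((n:ℝ) + 1) * ((n:ℝ) + 2)) * 2 ^ (m-1)) := by
          apply one_div_le_one_div_of_le (by positivity) e2
      _ = (1/2:ℝ)^(m-1) * (1 / (((n:ℝ) + 1) * ((n:ℝ) + 2))) := by
          rw [div_pow]; field_simp; ring
  have htail : ∑' n : ℕ, 1 / ((n : ℝ) + 2) ^ (m+1) ≤ (1/2:ℝ)^(m-1) := by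
    calc ∑' n : ℕ, 1 / ((n : ℝ) + 2) ^ (m+1)
        ≤ ∑' n : ℕ, (1/2:ℝ)^(m-1) * (1 / ((n : ℝ) + 1) - 1 / ((n : ℝ) + 2)) :=
          Summable.tsum_le_tsum key hshift hg.summable
      _ = (1/2:ℝ)^(m-1) * 1 := hg.tsum_eq
      _ = (1/2:ℝ)^(m-1) := by ring
  have hpow : (1/2:ℝ)^(m-1) = 2 * (1/2:ℝ)^m := by
    obtain ⟨e, rfl⟩ : ∃ e, m = e + 1 := ⟨m - 1, by omega⟩
    simp [pow_succ]; ring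
  rw [hsplit]
  rw [hpow] at htail
  linarith
lemma two_zpow_neg (m : ℕ) : (2:ℝ) ^ (-(m:ℤ)) = (1/2:ℝ) ^ m := by
  rw [zpow_neg, zpow_natCast, one_div, inv_pow]

lemma eps_bounds {m : ℕ} (hm : 1 ≤ m) : |eps m| ≤ (1/2:ℝ) ^ m := by
  have h1 := one_le_zeta hm
  have h2 := zeta_le hm
  have ht : (0:ℝ) < (1/2:ℝ)^m := by positivity
  have ht2 : (1/2:ℝ)^m ≤ 1/2 := by
    calc (1/2:ℝ)^m ≤ (1/2:ℝ)^1 := by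
          apply pow_le_pow_of_le_one (by norm_num) (by norm_num) hm
      _ = 1/2 := by norm_num
  rw [abs_le]
  unfold eps
  rw [two_zpow_neg]
  constructor <;> nlinarith
lemma abs_b_le {m : ℕ} (hm : 1 ≤ m) : |b m| ≤ 1 + (1/2:ℝ) ^ m := by
  rw [b_eq, abs_mul, abs_pow, abs_neg, abs_one, one_pow, one_mul]
  calc |1 + eps m| ≤ |(1:ℝ)| + |eps m| := abs_add_le _ _
    _ ≤ 1 + (1/2:ℝ)^m := by have := eps_bounds hm; rw [abs_one]; linarith

lemma abs_D_le {m : ℕ} (hm : 1 ≤ m) : |D m| ≤ (3/2 : ℝ) * (1/2:ℝ) ^ m := by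
  have hne : m ≠ 0 := by omega
  have e : D m = (-1)^(m+1) * (eps m - eps (m+1)) := by
    unfold D
    simp only [hne, if_false]
    rw [b_eq, b_eq]
    ring
  rw [e, abs_mul, abs_pow, abs_neg, abs_one, one_pow, one_mul]
  have h1 := eps_bounds hm
  have h2 := eps_bounds (m := m + 1) (by omega)
  have : (1/2:ℝ)^(m+1) = (1/2) * (1/2:ℝ)^m := by rw [pow_succ]; ring
  calc |eps m - eps (m+1)| ≤ |eps m| + |eps (m+1)| := abs_sub _ _
    _ ≤ (3/2:ℝ) * (1/2:ℝ)^m := by rw [this] at h2; linarith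

lemma E_eq : ∀ k : ℕ, 1 ≤ k → ∑ m ∈ range k, (-1:ℝ)^m * D m = eps k := by
  intro k hk
  induction k with
  | zero => omega
  | succ n ih =>
    rcases Nat.eq_or_lt_of_le hk with h | h
    · -- n + 1 = 1, i.e. n = 0
      have hn : n = 0 := by omega
      subst hn
      simp [D, b_eq]
    · have hn : 1 ≤ n := by omega
      rw [Finset.sum_range_succ, ih hn]
      have hne : n ≠ 0 := by omega
      have hsq : (-1:ℝ)^n * (-1:ℝ)^n = 1 := by
        rw [← pow_add, ← two_mul, pow_mul]; norm_num
      unfold D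
      simp only [hne, if_false]
      rw [b_eq, b_eq]
      ring_nf
      ring_nf at hsq
      rw [hsq]
      ring

lemma my_geom_sum_le {r : ℝ} (h0 : 0 ≤ r) (h1 : r < 1) (n : ℕ) :
    ∑ i ∈ range n, r ^ i ≤ (1 - r)⁻¹ := by
  rw [geom_sum_eq (ne_of_lt h1), div_le_iff_of_neg (by linarith : r - 1 < 0)]
  have hfield : ((1:ℝ) - r)⁻¹ * (r - 1) = -1 := by
    have h1r : (1:ℝ) - r ≠ 0 := by linarith
    field_simp
    ring
  rw [hfield]
  linarith [pow_nonneg h0 n]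
section seq
variable (a : ℕ → ℝ)

lemma c_expand : ∀ (m j : ℕ),
    a j = (∑ i ∈ range m, (-1:ℝ)^i * (a (j+i+1) + a (j+i))) + (-1:ℝ)^m * a (j+m) := by
  intro m
  induction m with
  | zero => intro j; simp
  | succ m ih =>
    intro j
    rw [Finset.sum_range_succ, pow_succ,
      show j + (m+1) = j + m + 1 from by omega]
    linear_combination ih j

variable (h0 : a 0 = 1) (h1 : a 1 = 0)
  (hrec : ∀ k, 2 ≤ k →
      a k = (1 / (k : ℝ)) * ∑ j ∈ Finset.range (k - 1), a j * b (k - 1 - j))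

include h0 h1 hrec in
lemma a_abs_le : ∀ k, |a k| ≤ 1 := by
  intro k
  induction k using Nat.strong_induction_on with
  | _ k ih =>
    match k with
    | 0 => simp [h0]
    | 1 => simp [h1]
    | (n+2) =>
      rw [hrec (n+2) (by omega)]
      simp only [show n+2-1 = n+1 from rfl]
      have hsum : |∑ j ∈ range (n+1), a j * b (n+1-j)| ≤ (n:ℝ)+2 := by
        calc |∑ j ∈ range (n+1), a j * b (n+1-j)|
            ≤ ∑ j ∈ range (n+1), |a j * b (n+1-j)| := Finset.abs_sum_le_sum_abs _ _
          _ ≤ ∑ j ∈ range (n+1), (1 + (1/2:ℝ)^(n+1-j)) := by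
              apply Finset.sum_le_sum; intro j hj
              rw [abs_mul]
              have hj' : j < n+1 := mem_range.1 hj
              have h1le : 1 ≤ n+1-j := by omega
              have hb := abs_b_le h1le
              have ha := ih j (by omega)
              have hb0 : (0:ℝ) ≤ |b (n+1-j)| := abs_nonneg _
              nlinarith [abs_nonneg (a j)]
          _ = (n+1 : ℝ) + ∑ j ∈ range (n+1), (1/2:ℝ)^(n+1-j) := by
              rw [Finset.sum_add_distrib, Finset.sum_const, card_range, nsmul_eq_mul]
              push_cast
              ring
          _ ≤ (n+1:ℝ) + 1 := by
              have hrefl : ∑ j ∈ range (n+1), (1/2:ℝ)^(n+1-j)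
                  = ∑ j ∈ range (n+1), (1/2:ℝ)^(j+1) := by
                rw [← Finset.sum_range_reflect (fun j => (1/2:ℝ)^(j+1)) (n+1)]
                apply Finset.sum_congr rfl
                intro j hj
                congr 1
                simp only [mem_range] at hj
                omega
              rw [hrefl]
              have heq : ∑ j ∈ range (n+1), (1/2:ℝ)^(j+1)
                  = (1/2) * ∑ j ∈ range (n+1), (1/2:ℝ)^j := by
                rw [Finset.mul_sum]
                apply Finset.sum_congr rfl
                intro j _
                rw [pow_succ]; ring
              rw [heq]
              have hg := my_geom_sum_le (r := (1/2:ℝ)) (by norm_num) (by norm_num) (n+1)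
              norm_num at hg ⊢
              linarith
          _ ≤ (n:ℝ)+2 := by linarith
      rw [abs_mul]
      have hc : |1 / ((n+2 : ℕ) : ℝ)| = 1 / ((n:ℝ)+2) := by
        rw [abs_of_nonneg (by positivity)]
        push_cast
        ring
      rw [hc]
      have hpos : (0:ℝ) < (n:ℝ)+2 := by positivity
      calc 1 / ((n:ℝ)+2) * |∑ j ∈ range (n+1), a j * b (n+1-j)|
          ≤ 1 / ((n:ℝ)+2) * ((n:ℝ)+2) := by
            apply mul_le_mul_of_nonneg_left hsum (by positivity)
        _ = 1 := by field_simp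

include hrec in
lemma key_identity (n : ℕ) :
    ((n:ℝ)+3) * (a (n+3) + a (n+2)) = (a (n+2) + a (n+1)) + a (n+1) * eps (n+2)
      + ∑ m ∈ range (n+2), D m *
          (∑ i ∈ range m, (-1:ℝ)^i * (a (n+1-m+i+1) + a (n+1-m+i))) := by
  have step1 : ((n:ℝ)+3) * a (n+3) = ∑ j ∈ range (n+2), a j * b (n+2-j) := by
    have h := hrec (n+3) (by omega)
    simp only [show n + 3 - 1 = n + 2 by omega] at h
    rw [h]
    have : ((n+3:ℕ):ℝ) ≠ 0 := by positivity
    push_cast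
    field_simp
  have step2 : ((n:ℝ)+2) * a (n+2) = ∑ j ∈ range (n+1), a j * b (n+1-j) := by
    have h := hrec (n+2) (by omega)
    simp only [show n + 2 - 1 = n + 1 by omega] at h
    rw [h]
    push_cast
    field_simp
  have step3 : ∑ j ∈ range (n+2), a j * b (n+2-j)
      = ∑ j ∈ range (n+1), a j * b (n+2-j) + a (n+1) * b 1 := by
    rw [Finset.sum_range_succ, show n + 2 - (n+1) = 1 from by omega]
  -- combine into sum over m of a (n+1-m) * D m
  have step5 : ∑ j ∈ range (n+1), (a j * b (n+2-j) + a j * b (n+1-j))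
      = ∑ m ∈ range (n+1), a (n-m) * (b (m+1) + b (m+2)) := by
    rw [← Finset.sum_range_reflect (fun m => a (n-m) * (b (m+1) + b (m+2))) (n+1)]
    apply Finset.sum_congr rfl
    intro j hj
    simp only [mem_range] at hj
    have e1 : n - (n + 1 - 1 - j) = j := by omega
    have e2 : n + 1 - 1 - j + 1 = n + 1 - j := by omega
    have e3 : n + 1 - 1 - j + 2 = n + 2 - j := by omega
    rw [e1, e2, e3]
    ring
  have step6 : ∑ m ∈ range (n+2), a (n+1-m) * D m
      = a (n+1) * (b 1 - 1) + ∑ m ∈ range (n+1), a (n-m) * (b (m+1) + b (m+2)) := by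
    rw [Finset.sum_range_succ' (fun m => a (n+1-m) * D m) (n+1)]
    have hD0 : D 0 = b 1 - 1 := by simp [D]
    simp only [Nat.sub_zero, hD0]
    rw [add_comm]
    congr 1
    apply Finset.sum_congr rfl
    intro m hm
    have : D (m+1) = b (m+1) + b (m+2) := by simp [D]
    rw [this]
    congr 2
    omega
  have main : ((n:ℝ)+3) * a (n+3) + ((n:ℝ)+2) * a (n+2)
      = a (n+1) + ∑ m ∈ range (n+2), a (n+1-m) * D m := by
    have hsum_add : ∑ j ∈ range (n+1), (a j * b (n+2-j) + a j * b (n+1-j))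
        = ∑ j ∈ range (n+1), a j * b (n+2-j) + ∑ j ∈ range (n+1), a j * b (n+1-j) :=
      Finset.sum_add_distrib
    rw [step1, step2, step3, step6, ← step5, hsum_add]
    ring
  -- expand a (n+1-m)
  have step7 : ∑ m ∈ range (n+2), a (n+1-m) * D m
      = a (n+1) * eps (n+2)
        + ∑ m ∈ range (n+2), D m *
            (∑ i ∈ range m, (-1:ℝ)^i * (a (n+1-m+i+1) + a (n+1-m+i))) := by
    have hexp : ∀ m ∈ range (n+2), a (n+1-m) * D m
        = ((-1:ℝ)^m * D m) * a (n+1)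
          + D m * (∑ i ∈ range m, (-1:ℝ)^i * (a (n+1-m+i+1) + a (n+1-m+i))) := by
      intro m hm
      simp only [mem_range] at hm
      have hc := c_expand a m (n+1-m)
      have hnm : n + 1 - m + m = n + 1 := by omega
      rw [hnm] at hc
      rw [hc]
      ring
    rw [Finset.sum_congr rfl hexp, Finset.sum_add_distrib, ← Finset.sum_mul,
      E_eq (n+2) (by omega)]
    ring
  rw [step7] at main
  linarith [main]

end seq
noncomputable def Cc : ℝ := 2 * (4/3:ℝ)^40

lemma Cc_ge_one : (1:ℝ) ≤ Cc := by
  unfold Cc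
  have h : (1:ℝ)^40 ≤ (4/3:ℝ)^40 := pow_le_pow_left₀ (by norm_num) (by norm_num) 40
  simp at h
  nlinarith

section seq2
variable (a : ℕ → ℝ) (h0 : a 0 = 1) (h1 : a 1 = 0)
  (hrec : ∀ k, 2 ≤ k →
      a k = (1 / (k : ℝ)) * ∑ j ∈ Finset.range (k - 1), a j * b (k - 1 - j))

include h0 h1 hrec in
lemma c_decay : ∀ k, |a (k+1) + a k| ≤ Cc * (3/4:ℝ)^k := by
  intro k
  induction k using Nat.strong_induction_on with
  | _ k ih =>
    have habs := a_abs_le a h0 h1 hrec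
    by_cases hk : k ≤ 40
    · have h2 : |a (k+1) + a k| ≤ 2 := by
        calc |a (k+1) + a k| ≤ |a (k+1)| + |a k| := abs_add_le _ _
          _ ≤ 2 := by linarith [habs (k+1), habs k]
      have hC : 2 ≤ Cc * (3/4:ℝ)^k := by
        unfold Cc
        have h40 : (4/3:ℝ)^k ≤ (4/3:ℝ)^40 :=
          pow_le_pow_right₀ (by norm_num) hk
        have hone : (4/3:ℝ)^k * (3/4:ℝ)^k = 1 := by
          rw [← mul_pow]; norm_num
        have hp : (0:ℝ) < (3/4:ℝ)^k := by positivity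
        nlinarith
      linarith
    · -- k ≥ 41
      obtain ⟨n, rfl⟩ : ∃ n, k = n + 2 := ⟨k - 2, by omega⟩
      have hn : 39 ≤ n := by omega
      have hid := key_identity a hrec n
      set r : ℝ := (3/4:ℝ) with hr
      have hrpos : ∀ e : ℕ, (0:ℝ) < r ^ e := fun e => by rw [hr]; positivity
      have hX : (0:ℝ) < Cc * r^(n+1) := by
        have := Cc_ge_one; nlinarith [hrpos (n+1)]
      -- bound the big sum
      have hS : |∑ m ∈ range (n+2), D m *
            (∑ i ∈ range m, (-1:ℝ)^i * (a (n+1-m+i+1) + a (n+1-m+i)))|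
          ≤ 18 * (Cc * r^(n+1)) := by
        calc |∑ m ∈ range (n+2), D m *
            (∑ i ∈ range m, (-1:ℝ)^i * (a (n+1-m+i+1) + a (n+1-m+i)))|
            ≤ ∑ m ∈ range (n+2), |D m *
                (∑ i ∈ range m, (-1:ℝ)^i * (a (n+1-m+i+1) + a (n+1-m+i)))| :=
              Finset.abs_sum_le_sum_abs _ _
          _ ≤ ∑ m ∈ range (n+2), 6 * Cc * r^(n+1) * (2/3:ℝ)^m := by
              apply Finset.sum_le_sum
              intro m hm
              simp only [mem_range] at hm
              match m with
              | 0 =>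
                simp only [range_zero, Finset.sum_empty, mul_zero, abs_zero, pow_zero, mul_one]
                nlinarith [hX]
              | (m+1) =>
                set M := m + 1
                have hM1 : 1 ≤ M := by omega
                have hMn : M ≤ n + 1 := by omega
                have hT : |∑ i ∈ range M, (-1:ℝ)^i * (a (n+1-M+i+1) + a (n+1-M+i))|
                    ≤ 4 * Cc * r^(n+1-M) := by
                  calc |∑ i ∈ range M, (-1:ℝ)^i * (a (n+1-M+i+1) + a (n+1-M+i))|
                      ≤ ∑ i ∈ range M, |(-1:ℝ)^i * (a (n+1-M+i+1) + a (n+1-M+i))| :=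
                        Finset.abs_sum_le_sum_abs _ _
                    _ ≤ ∑ i ∈ range M, Cc * r^(n+1-M) * r^i := by
                        apply Finset.sum_le_sum
                        intro i hi
                        simp only [mem_range] at hi
                        rw [abs_mul, abs_pow, abs_neg, abs_one, one_pow, one_mul]
                        have hidx : n+1-M+i < n+2 := by omega
                        have hihyp := ih (n+1-M+i) hidx
                        calc |a (n+1-M+i+1) + a (n+1-M+i)| ≤ Cc * r^(n+1-M+i) := hihyp
                          _ = Cc * r^(n+1-M) * r^i := by rw [pow_add]; ring
                    _ = Cc * r^(n+1-M) * ∑ i ∈ range M, r^i := by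
                        rw [← Finset.mul_sum]
                    _ ≤ Cc * r^(n+1-M) * 4 := by
                        have hg := my_geom_sum_le (r := r) (by rw [hr]; norm_num)
                          (by rw [hr]; norm_num) M
                        have : ((1:ℝ) - r)⁻¹ = 4 := by rw [hr]; norm_num
                        rw [this] at hg
                        have hpos : (0:ℝ) < Cc * r^(n+1-M) := by
                          have := Cc_ge_one; nlinarith [hrpos (n+1-M)]
                        nlinarith
                    _ = 4 * Cc * r^(n+1-M) := by ring
                have hD := abs_D_le (m := M) hM1
                have hpow : r^(n+1) = r^M * r^(n+1-M) := by
                  rw [← pow_add]; congr 1; omega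
                have hhalf : (1/2:ℝ)^m = (2/3:ℝ)^m * (3/4:ℝ)^m := by
                  rw [← mul_pow]; norm_num
                calc |D M * (∑ i ∈ range M, (-1:ℝ)^i * (a (n+1-M+i+1) + a (n+1-M+i)))|
                    = |D M| * |∑ i ∈ range M, (-1:ℝ)^i * (a (n+1-M+i+1) + a (n+1-M+i))| :=
                      abs_mul _ _
                  _ ≤ ((3/2:ℝ) * (1/2:ℝ)^M) * (4 * Cc * r^(n+1-M)) := by
                      apply mul_le_mul hD hT (abs_nonneg _) (by positivity)
                  _ = 6 * Cc * ((1/2:ℝ)^M * r^(n+1-M)) := by ring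
                  _ = 6 * Cc * r^(n+1) * (2/3:ℝ)^M := by
                      rw [hpow]
                      linear_combination (3 * Cc * (3/4:ℝ)^(n+1-M)) * hhalf
          _ = 6 * Cc * r^(n+1) * ∑ m ∈ range (n+2), (2/3:ℝ)^m := by
              rw [← Finset.mul_sum]
          _ ≤ 18 * (Cc * r^(n+1)) := by
              have hg := my_geom_sum_le (r := (2/3:ℝ)) (by norm_num) (by norm_num) (n+2)
              have he : ((1:ℝ) - 2/3)⁻¹ = 3 := by norm_num
              rw [he] at hg
              have hgnn : (0:ℝ) ≤ ∑ m ∈ range (n+2), (2/3:ℝ)^m := by positivity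
              nlinarith
      have hA : |a (n+2) + a (n+1)| ≤ Cc * r^(n+1) := ih (n+1) (by omega)
      have hB : |a (n+1) * eps (n+2)| ≤ Cc * r^(n+1) := by
        rw [abs_mul]
        have he := eps_bounds (m := n+2) (by omega)
        have ha := habs (n+1)
        have h12 : (1/2:ℝ)^(n+2) ≤ r^(n+1) := by
          calc (1/2:ℝ)^(n+2) ≤ (1/2:ℝ)^(n+1) := by
                apply pow_le_pow_of_le_one (by norm_num) (by norm_num) (by omega)
            _ ≤ r^(n+1) := by
                apply pow_le_pow_left₀ (by norm_num) (by rw [hr]; norm_num)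
        have hCc := Cc_ge_one
        have habs_e : (0:ℝ) ≤ |eps (n+2)| := abs_nonneg _
        have habs_a : (0:ℝ) ≤ |a (n+1)| := abs_nonneg _
        nlinarith [hrpos (n+1)]
      have hmain : ((n:ℝ)+3) * |a (n+3) + a (n+2)| ≤ 20 * (Cc * r^(n+1)) := by
        have : ((n:ℝ)+3) * |a (n+3) + a (n+2)| = |((n:ℝ)+3) * (a (n+3) + a (n+2))| := by
          rw [abs_mul, abs_of_nonneg (by positivity : (0:ℝ) ≤ (n:ℝ)+3)]
        rw [this, hid]
        calc |(a (n+2) + a (n+1)) + a (n+1) * eps (n+2)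
              + ∑ m ∈ range (n+2), D m *
                  (∑ i ∈ range m, (-1:ℝ)^i * (a (n+1-m+i+1) + a (n+1-m+i)))|
            ≤ |a (n+2) + a (n+1)| + |a (n+1) * eps (n+2)|
              + |∑ m ∈ range (n+2), D m *
                  (∑ i ∈ range m, (-1:ℝ)^i * (a (n+1-m+i+1) + a (n+1-m+i)))| := by
              apply (abs_add_le _ _).trans
              apply add_le_add_left (abs_add_le _ _)
          _ ≤ 20 * (Cc * r^(n+1)) := by linarith
      -- conclude
      have hnn : (42:ℝ) ≤ (n:ℝ) + 3 := by
        have : (39:ℝ) ≤ (n:ℝ) := by exact_mod_cast hn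
        linarith
      have hgoal : |a (n+3) + a (n+2)| ≤ Cc * r^(n+2) := by
        have hcnn : (0:ℝ) ≤ |a (n+3) + a (n+2)| := abs_nonneg _
        have hre : Cc * r^(n+2) = (3/4) * (Cc * r^(n+1)) := by
          rw [pow_succ]; ring
        rw [hre]
        nlinarith
      exact hgoal

end seq2
theorem a_succ_add_a_littleO (a : ℕ → ℝ)
    (h0 : a 0 = 1) (h1 : a 1 = 0)
    (hrec : ∀ k, 2 ≤ k →
      a k = (1 / (k : ℝ)) * ∑ j ∈ Finset.range (k - 1), a j * b (k - 1 - j)) :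
    Tendsto (fun k : ℕ => (k : ℝ) * (a (k + 1) + a k)) atTop (𝓝 0) := by
  have hdecay := c_decay a h0 h1 hrec
  apply squeeze_zero_norm (a := fun k : ℕ => Cc * ((k:ℝ) * (3/4:ℝ)^k))
  · intro k
    rw [Real.norm_eq_abs, abs_mul, abs_of_nonneg (Nat.cast_nonneg k)]
    calc (k:ℝ) * |a (k+1) + a k| ≤ (k:ℝ) * (Cc * (3/4:ℝ)^k) := by
          apply mul_le_mul_of_nonneg_left (hdecay k) (Nat.cast_nonneg k)
      _ = Cc * ((k:ℝ) * (3/4:ℝ)^k) := by ring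
  · have hs : Summable (fun n : ℕ => (n:ℝ)^1 * (3/4:ℝ)^n) :=
      summable_pow_mul_geometric_of_norm_lt_one 1 (by rw [Real.norm_eq_abs, abs_of_nonneg (by norm_num : (0:ℝ) ≤ 3/4)]; norm_num)
    have ht := hs.tendsto_atTop_zero
    have := ht.const_mul Cc
    simp only [pow_one, mul_zero] at this
    exact this
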